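/- Let d ≥ 1, ω := exp(2πi/d), and let Z and X be the d×d complex matrices determined by Z e_k = ω^k e_k and X e_k = e_{(k+1) mod d} on the standard basis (e_k)_{k=0}^{d−1} of ℂ^d. Let v ∈ ℂ^d be a nonzero eigenvector of XZ. Then |v_k|² = ‖v‖²/d for every k = 0, …, d−1, and moreover |⟨f_k, v⟩|² = ‖v‖²/d for every k, where f_k := (1/√d)·(ω^{jk})_{j=0}^{d−1} is the k-th discrete Fourier basis vector (the eigenbasis of X). In other words, every eigenstate of XZ is mutually unbiased with both the eigenbasis of Z and the eigenbasis of X. -/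

import Mathlib

open scoped BigOperators

open Fin.NatCast

lemma val_add_one' {d : ℕ} [NeZero d] (l : Fin d) : ((l + 1 : Fin d) : ℕ) = ((l : ℕ) + 1) % d := by
  rw [Fin.add_def]
  rcases d with _ | n
  · exact absurd rfl (NeZero.ne 0)
  · rw [Fin.val_one']; simp [Nat.add_mod]

lemma fin_const' {d : ℕ} [NeZero d] (g : Fin d → ℝ) (h : ∀ j, g (j + 1) = g j)
    (i j : Fin d) : g i = g j := by
  have key : ∀ (n : ℕ) (i : Fin d), g (i + (n : Fin d)) = g i := by
    intro n
    induction n with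
    | zero => simp
    | succ n ih =>
      intro i
      have : ((n + 1 : ℕ) : Fin d) = (n : Fin d) + 1 := by push_cast; ring
      rw [this, ← add_assoc, h, ih]
  have h2 : j = i + (((j - i : Fin d) : ℕ) : Fin d) := by
    rw [Fin.cast_val_eq_self]; exact (add_sub_cancel i j).symm
  rw [h2, key]

lemma pow_mod_eq' {d : ℕ} {ω : ℂ} (h1 : ω ^ d = 1) (a : ℕ) : ω ^ (a % d) = ω ^ a := by
  conv_rhs => rw [← Nat.mod_add_div a d, pow_add, pow_mul, h1, one_pow, mul_one]

lemma nonneg_pow_eq_one' {x : ℝ} (hx : 0 ≤ x) {d : ℕ} (hd : d ≠ 0) (h : x ^ d = 1) : x = 1 := by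
  rcases lt_trichotomy x 1 with h1 | h1 | h1
  · have := pow_lt_one₀ hx h1 hd; linarith
  · exact h1
  · have := one_lt_pow₀ h1 hd; linarith

lemma geom_fin' {d : ℕ} {t : ℂ} (htd : t ^ d = 1) :
    ∑ k : Fin d, t ^ (k : ℕ) = if t = 1 then (d : ℂ) else 0 := by
  rw [Fin.sum_univ_eq_sum_range]
  split
  · rename_i h; subst h; simp
  · rename_i h
    rw [geom_sum_eq h d, htd]
    simp

lemma parseval' {d : ℕ} {ω : ℂ} (hprim : IsPrimitiveRoot ω d)
    (hu : (starRingEnd ℂ) ω * ω = 1) (v : Fin d → ℂ) :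
    ∑ k : Fin d, (∑ j : Fin d, (starRingEnd ℂ) ω ^ ((j:ℕ)*(k:ℕ)) * v j) *
      (starRingEnd ℂ) (∑ j : Fin d, (starRingEnd ℂ) ω ^ ((j:ℕ)*(k:ℕ)) * v j)
      = d * ∑ j : Fin d, v j * (starRingEnd ℂ) (v j) := by
  have hωd : ω ^ d = 1 := hprim.pow_eq_one
  set c := (starRingEnd ℂ) ω with hc
  have hcω : (starRingEnd ℂ) c = ω := Complex.conj_conj ω
  have hcd : c ^ d = 1 := by rw [hc, ← map_pow, hωd, map_one]
  have hiff : ∀ j j' : Fin d, (c ^ (j:ℕ) * ω ^ (j':ℕ) = 1) ↔ j = j' := by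
    intro j j'
    have hinv : c ^ (j:ℕ) * ω ^ (j:ℕ) = 1 := by rw [← mul_pow, hu, one_pow]
    have hc0 : c ^ (j:ℕ) ≠ 0 := by
      intro h0; rw [h0, zero_mul] at hinv; exact zero_ne_one hinv
    constructor
    · intro h
      have h2 : ω ^ (j':ℕ) = ω ^ (j:ℕ) := mul_left_cancel₀ hc0 (h.trans hinv.symm)
      exact (Fin.ext (hprim.pow_inj j'.isLt j.isLt h2)).symm
    · rintro rfl; exact hinv
  have expand : ∀ k : Fin d,
      (∑ j : Fin d, c ^ ((j:ℕ)*(k:ℕ)) * v j) * (starRingEnd ℂ) (∑ j : Fin d, c ^ ((j:ℕ)*(k:ℕ)) * v j)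
      = ∑ j : Fin d, ∑ j' : Fin d, (c ^ (j:ℕ) * ω ^ (j':ℕ)) ^ (k:ℕ) * (v j * (starRingEnd ℂ) (v j')) := by
    intro k
    rw [map_sum, Finset.sum_mul_sum]
    refine Finset.sum_congr rfl fun j _ => Finset.sum_congr rfl fun j' _ => ?_
    rw [map_mul, map_pow, hcω, mul_pow, ← pow_mul, ← pow_mul]
    ring
  rw [Finset.sum_congr rfl fun k _ => expand k]
  rw [Finset.sum_comm]
  rw [Finset.sum_congr rfl fun j _ => Finset.sum_comm]
  have inner : ∀ j j' : Fin d,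
      ∑ k : Fin d, (c ^ (j:ℕ) * ω ^ (j':ℕ)) ^ (k:ℕ) * (v j * (starRingEnd ℂ) (v j'))
      = (if j = j' then (d:ℂ) else 0) * (v j * (starRingEnd ℂ) (v j')) := by
    intro j j'
    rw [← Finset.sum_mul, geom_fin' (by rw [mul_pow, ← pow_mul, ← pow_mul, mul_comm (j:ℕ) d,
      mul_comm (j':ℕ) d, pow_mul, pow_mul, hcd, hωd, one_pow, one_pow, one_mul])]
    rw [if_congr (hiff j j') rfl rfl]
  rw [Finset.sum_congr rfl fun j _ => Finset.sum_congr rfl fun j' _ => inner j j']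
  simp only [ite_mul, zero_mul, Finset.sum_ite_eq, Finset.mem_univ, if_true]
  rw [Finset.mul_sum]

/-- The standard Hermitian inner product on `ℂ^d`, conjugate-linear in the
first argument: `⟨φ, ψ⟩ = ∑ i, conj (φ i) * ψ i`. -/
noncomputable def inp {d : ℕ} (φ ψ : Fin d → ℂ) : ℂ :=
  ∑ i, (starRingEnd ℂ) (φ i) * ψ i

theorem stmt11 (d : ℕ) (hd : 1 ≤ d)
    (ω : ℂ) (hω : ω = Complex.exp (2 * Real.pi * Complex.I / d))
    (Z X : Matrix (Fin d) (Fin d) ℂ)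
    (hZ : Z = Matrix.diagonal (fun k : Fin d => ω ^ (k : ℕ)))
    (hX : X = Matrix.of (fun i j : Fin d =>
      if (i : ℕ) = ((j : ℕ) + 1) % d then 1 else 0))
    (v : Fin d → ℂ) (hv : v ≠ 0)
    (μ : ℂ) (heig : (X * Z).mulVec v = μ • v)
    (f : Fin d → (Fin d → ℂ))
    (hf : f = fun (k : Fin d) => fun (j : Fin d) => (1 / (Real.sqrt d : ℂ)) * ω ^ ((j : ℕ) * (k : ℕ))) :
    (∀ k, ‖v k‖ ^ 2 = (∑ i, ‖v i‖ ^ 2) / d) ∧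
      (∀ k, ‖inp (f k) v‖ ^ 2 = (∑ i, ‖v i‖ ^ 2) / d) := by
  haveI : NeZero d := ⟨by omega⟩
  have hd0 : (d : ℝ) ≠ 0 := by positivity
  have hprim : IsPrimitiveRoot ω d := by
    rw [hω]; exact Complex.isPrimitiveRoot_exp d (by omega)
  have hωd : ω ^ d = 1 := hprim.pow_eq_one
  have habsω : ‖ω‖ = 1 := by
    rw [hω, show (2 * ↑Real.pi * Complex.I / (d:ℂ)) = ((2 * Real.pi / d : ℝ) : ℂ) * Complex.I by
      push_cast; ring, Complex.norm_exp_ofReal_mul_I]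
  set c := (starRingEnd ℂ) ω with hc
  have hu : c * ω = 1 := by
    rw [hc, mul_comm, Complex.mul_conj, Complex.normSq_eq_norm_sq, habsω]
    norm_num
  have hcd : c ^ d = 1 := by rw [hc, ← map_pow, hωd, map_one]
  -- Step 1: the eigen recurrence
  have hXZ : X * Z = Matrix.of (fun i l : Fin d =>
      if (i : ℕ) = ((l : ℕ) + 1) % d then ω ^ (l : ℕ) else 0) := by
    subst hX hZ
    ext i l
    rw [Matrix.mul_diagonal]
    simp [ite_mul]
  have key : ∀ j : Fin d, μ * v (j + 1) = ω ^ (j : ℕ) * v j := by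
    intro j
    have h1 := congrFun heig (j + 1)
    rw [hXZ] at h1
    simp only [Matrix.mulVec, dotProduct, Matrix.of_apply, Pi.smul_apply,
      smul_eq_mul] at h1
    have hcond : ∀ l : Fin d, (((j + 1 : Fin d) : ℕ) = ((l : ℕ) + 1) % d) = (l = j) := by
      intro l
      simp only [eq_iff_iff]
      rw [← val_add_one' l]
      constructor
      · intro h; have := Fin.val_injective h.symm; exact add_right_cancel this
      · rintro rfl; rfl
    simp only [hcond] at h1
    simp only [ite_mul, zero_mul, Finset.sum_ite_eq', Finset.mem_univ, if_true] at h1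
    exact h1.symm
  -- μ ≠ 0
  have hω0 : ω ≠ 0 := by
    intro h; rw [h] at habsω; simp at habsω
  have hμ0 : μ ≠ 0 := by
    intro h
    apply hv
    funext j
    have := key j
    rw [h, zero_mul] at this
    exact (mul_eq_zero.mp this.symm).resolve_left (pow_ne_zero _ hω0)
  -- modulus recurrence for v
  have habs_rec : ∀ j : Fin d, ‖μ‖ * ‖v (j + 1)‖ = ‖v j‖ := by
    intro j
    have := congrArg norm (key j)
    rwa [norm_mul, norm_mul, norm_pow, habsω, one_pow, one_mul] at this
  -- |μ| = 1
  obtain ⟨j0, hj0⟩ : ∃ j, v j ≠ 0 := by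
    by_contra h
    push_neg at h
    exact hv (funext h)
  have hiter : ∀ (n : ℕ) (j : Fin d),
      ‖v j‖ = ‖μ‖ ^ n * ‖v (j + (n : Fin d))‖ := by
    intro n
    induction n with
    | zero => intro j; simp
    | succ n ih =>
      intro j
      have hcast : ((n + 1 : ℕ) : Fin d) = (n : Fin d) + 1 := by push_cast; ring
      rw [hcast, ← add_assoc, pow_succ, mul_assoc, habs_rec (j + (n : Fin d)), ← ih]
  have hμ1 : ‖μ‖ = 1 := by
    have h1 := hiter d j0
    rw [show ((d : ℕ) : Fin d) = 0 by simp, add_zero] at h1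
    have hvpos : 0 < ‖v j0‖ := by
      simpa [norm_pos_iff] using hj0
    have hpow : ‖μ‖ ^ d = 1 := by
      have := mul_right_cancel₀ (ne_of_gt hvpos) (h1.symm.trans (one_mul _).symm)
      exact this
    exact nonneg_pow_eq_one' (norm_nonneg μ) (by omega) hpow
  -- all |v j| equal
  have hstep : ∀ j : Fin d, ‖v (j + 1)‖ = ‖v j‖ := by
    intro j
    have := habs_rec j
    rwa [hμ1, one_mul] at this
  have hconst : ∀ i j : Fin d, ‖v i‖ = ‖v j‖ :=
    fin_const' (fun j => ‖v j‖) hstep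
  have hsum : ∀ k : Fin d, (∑ i, ‖v i‖ ^ 2) = d * ‖v k‖ ^ 2 := by
    intro k
    rw [Finset.sum_congr rfl fun i _ => by rw [hconst i k]]
    simp [Finset.card_univ, mul_comm]
  have part1 : ∀ k : Fin d, ‖v k‖ ^ 2 = (∑ i, ‖v i‖ ^ 2) / d := by
    intro k
    rw [hsum k]
    field_simp
  refine ⟨part1, ?_⟩
  -- Fourier part
  set T : Fin d → ℂ := fun k => ∑ j : Fin d, c ^ ((j:ℕ)*(k:ℕ)) * v j with hT
  have hmod : ∀ a b : ℕ, a % d = b % d → c ^ a = c ^ b := by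
    intro a b h
    rw [← pow_mod_eq' hcd a, h, pow_mod_eq' hcd b]
  have hTrec : ∀ k : Fin d, μ * T (k + 1) = c ^ ((k:ℕ) + 1) * T k := by
    intro k
    have hre : T (k + 1) = ∑ j : Fin d, c ^ ((((j+1 : Fin d)):ℕ) * (((k+1 : Fin d)):ℕ)) * v (j + 1) := by
      rw [hT]
      exact Fintype.sum_equiv (Equiv.addRight (1 : Fin d)).symm _ _ (by intro j; simp)
    rw [hre, Finset.mul_sum]
    rw [hT, Finset.mul_sum]
    refine Finset.sum_congr rfl fun j _ => ?_
    have he : c ^ ((((j+1 : Fin d)):ℕ) * (((k+1 : Fin d)):ℕ)) = c ^ (((j:ℕ)+1) * ((k:ℕ)+1)) := by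
      apply hmod
      rw [val_add_one' j, val_add_one' k]
      exact (Nat.mul_mod _ _ _).symm
    rw [mul_left_comm μ, key j, he]
    have harith : ((j:ℕ)+1) * ((k:ℕ)+1) = (j:ℕ)*(k:ℕ) + (j:ℕ) + ((k:ℕ)+1) := by ring
    rw [harith, pow_add, pow_add]
    have h1 : c ^ (j:ℕ) * ω ^ (j:ℕ) = 1 := by rw [← mul_pow, hu, one_pow]
    linear_combination (c ^ ((j:ℕ)*(k:ℕ)) * c ^ ((k:ℕ)+1) * v j) * h1
  have hTstep : ∀ k : Fin d, ‖T (k + 1)‖ = ‖T k‖ := by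
    intro k
    have := congrArg norm (hTrec k)
    rw [norm_mul, norm_mul, hμ1, one_mul, norm_pow] at this
    have habsc : ‖c‖ = 1 := by rw [hc, Complex.norm_conj, habsω]
    rwa [habsc, one_pow, one_mul] at this
  have hTconst : ∀ i j : Fin d, ‖T i‖ = ‖T j‖ :=
    fin_const' (fun j => ‖T j‖) hTstep
  -- Parseval
  have hP := parseval' hprim hu v
  have hP2 : ∑ k : Fin d, ‖T k‖ ^ 2 = d * ∑ j, ‖v j‖ ^ 2 := by
    have h1 : ∀ z : ℂ, z * (starRingEnd ℂ) z = ((‖z‖ ^ 2 : ℝ) : ℂ) := by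
      intro z
      rw [Complex.mul_conj, Complex.normSq_eq_norm_sq]
    rw [Finset.sum_congr rfl fun k _ => h1 (T k), Finset.sum_congr rfl fun j _ => h1 (v j)] at hP
    exact_mod_cast hP
  have hTval : ∀ k : Fin d, ‖T k‖ ^ 2 = ∑ i, ‖v i‖ ^ 2 := by
    intro k
    have h2 : ∑ k' : Fin d, ‖T k'‖ ^ 2 = d * ‖T k‖ ^ 2 := by
      rw [Finset.sum_congr rfl fun k' _ => by rw [hTconst k' k]]
      simp [Finset.card_univ, mul_comm]
    have := h2.symm.trans hP2
    exact mul_left_cancel₀ hd0 this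
  -- relate inp (f k) v to T k
  intro k
  have hinp : inp (f k) v = (1 / ((Real.sqrt d : ℝ) : ℂ)) * T k := by
    rw [inp, hf, hT, Finset.mul_sum]
    refine Finset.sum_congr rfl fun j _ => ?_
    simp only [map_mul, map_pow, ← hc]
    rw [map_div₀, map_one, Complex.conj_ofReal]
    ring
  rw [hinp, norm_mul, mul_pow, hTval k]
  have hsq : ‖1 / ((Real.sqrt d : ℝ) : ℂ)‖ ^ 2 = 1 / d := by
    rw [norm_div, norm_one, Complex.norm_real, Real.norm_eq_abs, abs_of_nonneg (Real.sqrt_nonneg d)]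
    rw [div_pow, one_pow, Real.sq_sqrt (by positivity)]
  rw [hsq]
  ring
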